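/- Let ℱ = [c_1,...,c_n] be an m×n Ferrers diagram and δ ∈ {1,...,n} with ℓ = n−δ+1. If c_t ≥ n for all t = ℓ+1,...,n (i.e., the last δ−1 columns each have at least n dots), then ν_min(ℱ;δ) = ν_0(ℱ;δ) = Σ_{t=1}^{ℓ} c_t. -/

import Mathlib

/-- If the last `δ − 1` columns of an `m×n` Ferrers diagram with (0-based) column
counts `c 0 ≤ … ≤ c (n−1) ≤ m` each have at least `n` dots, then
`ν_min(ℱ;δ) = ν_0(ℱ;δ) = Σ_{t=0}^{ℓ−1} c t` where `ℓ = n − δ + 1`. -/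
theorem stmt14 {m n δ : ℕ} (hδ1 : 1 ≤ δ) (hδn : δ ≤ n) (c : ℕ → ℕ)
    (hmono : ∀ s t, s ≤ t → t < n → c s ≤ c t) (hcm : ∀ t < n, c t ≤ m)
    (hlast : ∀ t, n - δ + 1 ≤ t → t < n → n ≤ c t) :
    (Finset.range δ).inf' (Finset.nonempty_range_iff.mpr (by omega))
        (fun j => ∑ t ∈ Finset.range (n - δ + 1 + j), (c t - j)) =
      ∑ t ∈ Finset.range (n - δ + 1), c t := by
  set ℓ := n - δ + 1 with hℓ
  apply le_antisymm
  · have h0 : (0:ℕ) ∈ Finset.range δ := Finset.mem_range.mpr (by omega)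
    have := Finset.inf'_le (b := 0)
      (fun j => ∑ t ∈ Finset.range (ℓ + j), (c t - j)) h0
    simp only [add_zero, Nat.sub_zero] at this
    exact this
  · apply Finset.le_inf'
    intro j hj
    have hjδ : j < δ := Finset.mem_range.mp hj
    rw [Finset.sum_range_add (fun t => c t - j) ℓ j]
    have A : ∑ t ∈ Finset.range ℓ, c t ≤ (∑ t ∈ Finset.range ℓ, (c t - j)) + j * ℓ := by
      calc ∑ t ∈ Finset.range ℓ, c t ≤ ∑ t ∈ Finset.range ℓ, ((c t - j) + j) :=
            Finset.sum_le_sum (fun t _ => by omega)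
        _ = (∑ t ∈ Finset.range ℓ, (c t - j)) + ℓ * j := by
            rw [Finset.sum_add_distrib, Finset.sum_const, Finset.card_range, smul_eq_mul]
        _ = (∑ t ∈ Finset.range ℓ, (c t - j)) + j * ℓ := by ring
    have B : j * ℓ ≤ ∑ i ∈ Finset.range j, (c (ℓ + i) - j) := by
      calc j * ℓ = ∑ _i ∈ Finset.range j, ℓ := by
            rw [Finset.sum_const, Finset.card_range, smul_eq_mul]
        _ ≤ ∑ i ∈ Finset.range j, (c (ℓ + i) - j) := by
            apply Finset.sum_le_sum
            intro i hi
            have hi' : i < j := Finset.mem_range.mp hi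
            have hlt : ℓ + i < n := by omega
            have := hlast (ℓ + i) (by omega) hlt
            omega
    omega
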